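/- If L = x_1,...,x_ℓ is a genlex ordering of X ⊆ {0,1}^n, then for any three indices i < j < k we have λ(x_i, x_j) ≠ λ(x_j, x_k). -/

import Mathlib

def lamPos {n : ℕ} (x y : Fin n → Bool) : ℕ :=
  (Finset.univ.filter (fun i : Fin n => x i ≠ y i)).sup (fun i => (i : ℕ) + 1)

def hamming {n : ℕ} (x y : Fin n → Bool) : ℕ :=
  (Finset.univ.filter (fun i : Fin n => x i ≠ y i)).card

def sameSuffix {n : ℕ} (k : ℕ) (x y : Fin n → Bool) : Prop :=
  ∀ i : Fin n, n - k ≤ (i : ℕ) → x i = y i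

def IsOrdering {n : ℕ} (X : Finset (Fin n → Bool)) (L : List (Fin n → Bool)) : Prop :=
  L.Nodup ∧ ∀ x, x ∈ L ↔ x ∈ X

def IsGenlex {n : ℕ} (L : List (Fin n → Bool)) : Prop :=
  ∀ (k i j m : ℕ) (hij : i ≤ j) (hjm : j ≤ m) (hm : m < L.length),
    sameSuffix k (L.get ⟨i, by omega⟩) (L.get ⟨m, hm⟩) →
    sameSuffix k (L.get ⟨i, by omega⟩) (L.get ⟨j, by omega⟩)

def cost {n : ℕ} (L : List (Fin n → Bool)) : ℕ :=
  (L.zipWith lamPos L.tail).sum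

lemma lamPos_spec {n : ℕ} {x y : Fin n → Bool} (h : x ≠ y) :
    ∃ p : Fin n, x p ≠ y p ∧ lamPos x y = (p : ℕ) + 1 ∧
      ∀ q : Fin n, x q ≠ y q → (q : ℕ) ≤ (p : ℕ) := by
  have hne : (Finset.univ.filter (fun i : Fin n => x i ≠ y i)).Nonempty := by
    rcases Function.ne_iff.mp h with ⟨i, hi⟩
    exact ⟨i, by simp [hi]⟩
  obtain ⟨p, hp, hsup⟩ := Finset.exists_mem_eq_sup _ hne (fun i : Fin n => (i : ℕ) + 1)
  refine ⟨p, by simpa using hp, hsup, fun q hq => ?_⟩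
  have := Finset.le_sup (s := Finset.univ.filter (fun i : Fin n => x i ≠ y i))
    (f := fun i : Fin n => (i : ℕ) + 1)
    (Finset.mem_filter.mpr ⟨Finset.mem_univ q, hq⟩)
  rw [hsup] at this
  omega

theorem genlex_before_after {n : ℕ} (X : Finset (Fin n → Bool))
    (L : List (Fin n → Bool)) (hL : IsOrdering X L) (hgen : IsGenlex L)
    (i j k : ℕ) (hij : i < j) (hjk : j < k) (hk : k < L.length) :
    lamPos (L.get ⟨i, by omega⟩) (L.get ⟨j, by omega⟩) ≠
      lamPos (L.get ⟨j, by omega⟩) (L.get ⟨k, hk⟩) := by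
  intro heq
  set a := L.get ⟨i, by omega⟩ with ha
  set b := L.get ⟨j, by omega⟩ with hb
  set c := L.get ⟨k, hk⟩ with hc
  have hab : a ≠ b := fun h => by
    have := List.Nodup.get_inj_iff hL.1 |>.mp h
    simp at this; omega
  have hbc : b ≠ c := fun h => by
    have := List.Nodup.get_inj_iff hL.1 |>.mp h
    simp at this; omega
  obtain ⟨p, hpab, hpeq, hpmax⟩ := lamPos_spec hab
  obtain ⟨q, hqbc, hqeq, hqmax⟩ := lamPos_spec hbc
  have hpq : p = q := by
    apply Fin.ext
    rw [hpeq, hqeq] at heq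
    omega
  subst hpq
  have hac : a p = c p := by
    have : ∀ u v w : Bool, u ≠ v → v ≠ w → u = w := by decide
    exact this _ _ _ hpab hqbc
  have hsuf : sameSuffix (n - (p : ℕ)) a c := by
    intro t ht
    have hpn : (p : ℕ) < n := p.isLt
    have hpt : (p : ℕ) ≤ (t : ℕ) := by omega
    rcases eq_or_lt_of_le hpt with hcase | hcase
    · have : p = t := Fin.ext hcase
      rwa [← this]
    · have h1 : a t = b t := by
        by_contra hne
        exact absurd (hpmax t hne) (by omega)
      have h2 : b t = c t := by
        by_contra hne
        exact absurd (hqmax t hne) (by omega)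
      rw [h1, h2]
  have hsuf' : sameSuffix (n - (p : ℕ)) a b :=
    hgen (n - (p : ℕ)) i j k (le_of_lt hij) (le_of_lt hjk) hk hsuf
  have : a p = b p := hsuf' p (by have := p.isLt; omega)
  exact hpab this
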